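/- If A# ⊗̂ B# is approximately amenable, then B is approximately amenable. -/

import Mathlib

open Filter Topology MeasureTheory

/-- A Banach bimodule structure over a (not necessarily unital) normed algebra `A`.
`l a x` is the left action `a • x` and `r a x` is the right action `x • a`. -/
structure BBimod (A X : Type*) [NonUnitalNormedRing A] [NormedSpace ℂ A]
    [NormedAddCommGroup X] [NormedSpace ℂ X] where
  l : A →L[ℂ] X →L[ℂ] X
  r : A →L[ℂ] X →L[ℂ] X
  l_mul : ∀ a b x, l (a * b) x = l a (l b x)
  r_mul : ∀ a b x, r (a * b) x = r b (r a x)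
  lr : ∀ a b x, l a (r b x) = r b (l a x)

namespace BBimod

variable {A X : Type*} [NonUnitalNormedRing A] [NormedSpace ℂ A]
    [NormedAddCommGroup X] [NormedSpace ℂ X]

/-- The dual bimodule structure on `X →L[ℂ] ℂ`:
`(a • f) x = f (x • a)` and `(f • a) x = f (a • x)`. -/
noncomputable def dual (M : BBimod A X) : BBimod A (X →L[ℂ] ℂ) where
  l := (ContinuousLinearMap.compL ℂ X X ℂ).flip.comp M.r
  r := (ContinuousLinearMap.compL ℂ X X ℂ).flip.comp M.l
  l_mul := by intro a b f; ext x; simp [M.r_mul a b x]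
  r_mul := by intro a b f; ext x; simp [M.l_mul a b x]
  lr := by intro a b f; ext x; simp [M.lr]

/-- `D` is a derivation: `D (a b) = a • D b + D a • b`. -/
def IsDeriv (M : BBimod A X) (D : A →L[ℂ] X) : Prop :=
  ∀ a b, D (a * b) = M.l a (D b) + M.r b (D a)

/-- `D` is inner: `D a = a • x - x • a` for some `x`. -/
def IsInner (M : BBimod A X) (D : A →L[ℂ] X) : Prop :=
  ∃ x, ∀ a, D a = M.l a x - M.r a x

/-- `D` is approximately inner: a net of inner derivations converges to `D`
in the strong operator topology. -/
def IsApproxInner (M : BBimod A X) (D : A →L[ℂ] X) : Prop :=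
  ∃ (ι : Type) (lf : Filter ι) (x : ι → X), lf.NeBot ∧
    ∀ a, Tendsto (fun i => M.l a (x i) - M.r a (x i)) lf (𝓝 (D a))

/-- `D` is boundedly approximately inner: the approximating net of inner derivations
is uniformly bounded in operator norm. -/
def IsBddApproxInner (M : BBimod A X) (D : A →L[ℂ] X) : Prop :=
  ∃ (ι : Type) (lf : Filter ι) (x : ι → X) (K : ℝ), lf.NeBot ∧
    (∀ i a, ‖M.l a (x i) - M.r a (x i)‖ ≤ K * ‖a‖) ∧
    ∀ a, Tendsto (fun i => M.l a (x i) - M.r a (x i)) lf (𝓝 (D a))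

/-- `D` is approximately semi-inner: `D a = lim_i (a • m i - n i • a)`. -/
def IsApproxSemiInner (M : BBimod A X) (D : A →L[ℂ] X) : Prop :=
  ∃ (ι : Type) (lf : Filter ι) (m n : ι → X), lf.NeBot ∧
    ∀ a, Tendsto (fun i => M.l a (m i) - M.r a (n i)) lf (𝓝 (D a))

/-- The bimodule `X` is neo-unital: `X = A • X • A`. -/
def NeoUnital (M : BBimod A X) : Prop :=
  ∀ x : X, ∃ a b y, x = M.l a (M.r b y)

/-- A derivation into the dual module is boundedly weak*-approximately inner. -/
def IsBddWeakStarApproxInner (M : BBimod A X) (D : A →L[ℂ] (X →L[ℂ] ℂ)) : Prop :=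
  ∃ (ι : Type) (lf : Filter ι) (f : ι → (X →L[ℂ] ℂ)) (K : ℝ), lf.NeBot ∧
    (∀ i, ‖f i‖ ≤ K) ∧
    ∀ (a : A) (x : X),
      Tendsto (fun i => (M.dual.l a (f i) - M.dual.r a (f i)) x) lf (𝓝 (D a x))

end BBimod

/-- A Banach algebra is approximately amenable if every continuous derivation into
the dual of a Banach bimodule is approximately inner. -/
def ApproxAmenable (A : Type*) [NonUnitalNormedRing A] [NormedSpace ℂ A] : Prop :=
  ∀ (X : Type) [NormedAddCommGroup X] [NormedSpace ℂ X] [CompleteSpace X]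
    (M : BBimod A X) (D : A →L[ℂ] (X →L[ℂ] ℂ)),
    M.dual.IsDeriv D → M.dual.IsApproxInner D

/-- A Banach algebra is boundedly approximately amenable if every continuous derivation
into the dual of a Banach bimodule is boundedly approximately inner. -/
def BddApproxAmenable (A : Type*) [NonUnitalNormedRing A] [NormedSpace ℂ A] : Prop :=
  ∀ (X : Type) [NormedAddCommGroup X] [NormedSpace ℂ X] [CompleteSpace X]
    (M : BBimod A X) (D : A →L[ℂ] (X →L[ℂ] ℂ)),
    M.dual.IsDeriv D → M.dual.IsBddApproxInner D

/-- A Banach algebra is boundedly approximately contractible if every continuous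
derivation into any Banach bimodule is boundedly approximately inner. -/
def BddApproxContractible (A : Type*) [NonUnitalNormedRing A] [NormedSpace ℂ A] : Prop :=
  ∀ (X : Type) [NormedAddCommGroup X] [NormedSpace ℂ X] [CompleteSpace X]
    (M : BBimod A X) (D : A →L[ℂ] X),
    M.IsDeriv D → M.IsBddApproxInner D

/-- A Banach algebra is amenable if every continuous derivation into the dual of a
Banach bimodule is inner. -/
def Amenable (A : Type*) [NonUnitalNormedRing A] [NormedSpace ℂ A] : Prop :=
  ∀ (X : Type) [NormedAddCommGroup X] [NormedSpace ℂ X] [CompleteSpace X]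
    (M : BBimod A X) (D : A →L[ℂ] (X →L[ℂ] ℂ)),
    M.dual.IsDeriv D → M.dual.IsInner D

/-- `A` has a bounded (two-sided) approximate identity. -/
def HasBAI (A : Type*) [NonUnitalNormedRing A] : Prop :=
  ∃ (ι : Type) (lf : Filter ι) (e : ι → A) (K : ℝ), lf.NeBot ∧
    (∀ i, ‖e i‖ ≤ K) ∧
    ∀ a : A, Tendsto (fun i => e i * a) lf (𝓝 a) ∧ Tendsto (fun i => a * e i) lf (𝓝 a)

/-- A witness that the Banach algebra `C` is (isometrically isomorphic to) the projective
tensor product `A ⊗̂ B`: a contractive bilinear multiplicative map with dense span satisfying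
the universal property of the projective tensor norm. -/
structure ProjTensor (A B C : Type*) [NonUnitalNormedRing A] [NormedSpace ℂ A]
    [NonUnitalNormedRing B] [NormedSpace ℂ B]
    [NonUnitalNormedRing C] [NormedSpace ℂ C] where
  tp : A →L[ℂ] B →L[ℂ] C
  mk_mul : ∀ a a' b b', tp (a * a') (b * b') = tp a b * tp a' b'
  norm_mk_le : ∀ a b, ‖tp a b‖ ≤ ‖a‖ * ‖b‖
  dense_span : Dense
    ((Submodule.span ℂ (Set.range fun p : A × B => tp p.1 p.2) : Submodule ℂ C) : Set C)
  lift : ∀ (E : Type) [NormedAddCommGroup E] [NormedSpace ℂ E] [CompleteSpace E]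
    (φ : A →L[ℂ] B →L[ℂ] E), ∃ T : C →L[ℂ] E, ‖T‖ ≤ ‖φ‖ ∧ ∀ a b, T (tp a b) = φ a b

/-- A witness that the Banach space `T` is the projective tensor product `E ⊗̂ F`
of Banach spaces. -/
structure ProjTensorSp (E F T : Type*) [NormedAddCommGroup E] [NormedSpace ℂ E]
    [NormedAddCommGroup F] [NormedSpace ℂ F]
    [NormedAddCommGroup T] [NormedSpace ℂ T] where
  tp : E →L[ℂ] F →L[ℂ] T
  norm_mk_le : ∀ e f, ‖tp e f‖ ≤ ‖e‖ * ‖f‖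
  dense_span : Dense
    ((Submodule.span ℂ (Set.range fun p : E × F => tp p.1 p.2) : Submodule ℂ T) : Set T)
  lift : ∀ (W : Type) [NormedAddCommGroup W] [NormedSpace ℂ W] [CompleteSpace W]
    (φ : E →L[ℂ] F →L[ℂ] W), ∃ S : T →L[ℂ] W, ‖S‖ ≤ ‖φ‖ ∧ ∀ e f, S (tp e f) = φ e f

/-- A witness that the unital Banach algebra `A'` is the unitization `A#` of `A`. -/
structure IsUnitization (A A' : Type*) [NonUnitalNormedRing A] [NormedSpace ℂ A]
    [NormedRing A'] [NormedAlgebra ℂ A'] where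
  ι : A →L[ℂ] A'
  ι_mul : ∀ a b, ι (a * b) = ι a * ι b
  ι_norm : ∀ a, ‖ι a‖ = ‖a‖
  decomp : ∀ x : A', ∃! p : ℂ × A, x = algebraMap ℂ A' p.1 + ι p.2


section Aux

open ContinuousLinearMap

namespace BBimod

variable {A X : Type*} [NonUnitalNormedRing A] [NormedSpace ℂ A]
    [NormedAddCommGroup X] [NormedSpace ℂ X]

lemma dual_l_apply (M : BBimod A X) (a : A) (f : X →L[ℂ] ℂ) (x : X) :
    M.dual.l a f x = f (M.r a x) := rfl

lemma dual_r_apply (M : BBimod A X) (a : A) (f : X →L[ℂ] ℂ) (x : X) :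
    M.dual.r a f x = f (M.l a x) := rfl

end BBimod

namespace IsUnitization

variable {A A' : Type*} [NonUnitalNormedRing A] [NormedSpace ℂ A] [CompleteSpace A]
    [NormedRing A'] [NormedAlgebra ℂ A'] [CompleteSpace A']

/-- The canonical continuous linear map `ℂ × A → A'`. -/
noncomputable def emb (u : IsUnitization A A') : (ℂ × A) →L[ℂ] A' :=
  (algebraMapCLM ℂ A').comp (ContinuousLinearMap.fst ℂ ℂ A)
    + u.ι.comp (ContinuousLinearMap.snd ℂ ℂ A)

lemma emb_apply (u : IsUnitization A A') (p : ℂ × A) :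
    u.emb p = algebraMap ℂ A' p.1 + u.ι p.2 := rfl

lemma emb_bijective (u : IsUnitization A A') : Function.Bijective u.emb := by
  constructor
  · intro p p' hpp'
    exact (u.decomp (u.emb p')).unique (by rw [← hpp']; exact u.emb_apply p)
      (u.emb_apply p')
  · intro x
    obtain ⟨p, hp, -⟩ := u.decomp x
    exact ⟨p, by rw [u.emb_apply, ← hp]⟩

/-- The identification `ℂ × A ≃ A'`. -/
noncomputable def equivProd (u : IsUnitization A A') : (ℂ × A) ≃L[ℂ] A' :=
  ContinuousLinearEquiv.ofBijective u.emb
    (LinearMap.ker_eq_bot.mpr u.emb_bijective.injective)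
    (LinearMap.range_eq_top.mpr u.emb_bijective.surjective)

/-- The inverse decomposition map `A' → ℂ × A`. -/
noncomputable def q (u : IsUnitization A A') : A' →L[ℂ] ℂ × A :=
  (u.equivProd.symm : A' →L[ℂ] ℂ × A)

lemma q_emb (u : IsUnitization A A') (p : ℂ × A) : u.q (u.emb p) = p := by
  have : u.emb p = u.equivProd p := rfl
  rw [q, ContinuousLinearEquiv.coe_coe, this, ContinuousLinearEquiv.symm_apply_apply]

lemma emb_q (u : IsUnitization A A') (x : A') : u.emb (u.q x) = x := by
  have : ∀ p, u.emb p = u.equivProd p := fun _ => rfl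
  rw [q, ContinuousLinearEquiv.coe_coe, this, ContinuousLinearEquiv.apply_symm_apply]

lemma emb_mul (u : IsUnitization A A') (p p' : ℂ × A) :
    u.emb p * u.emb p'
      = u.emb (p.1 * p'.1, p.1 • p'.2 + p'.1 • p.2 + p.2 * p'.2) := by
  have h1 : algebraMap ℂ A' p.1 * algebraMap ℂ A' p'.1 = algebraMap ℂ A' (p.1 * p'.1) :=
    (map_mul _ _ _).symm
  have h2 : algebraMap ℂ A' p.1 * u.ι p'.2 = u.ι (p.1 • p'.2) := by
    rw [_root_.map_smul, Algebra.smul_def]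
  have h3 : u.ι p.2 * algebraMap ℂ A' p'.1 = u.ι (p'.1 • p.2) := by
    rw [_root_.map_smul, ← Algebra.commutes, Algebra.smul_def]
  have h4 : u.ι p.2 * u.ι p'.2 = u.ι (p.2 * p'.2) := (u.ι_mul _ _).symm
  rw [emb_apply, emb_apply, emb_apply, add_mul, mul_add, mul_add, h1, h2, h3, h4,
    map_add, map_add]
  abel

lemma q_mul (u : IsUnitization A A') (x y : A') :
    u.q (x * y) = ((u.q x).1 * (u.q y).1,
      (u.q x).1 • (u.q y).2 + (u.q y).1 • (u.q x).2 + (u.q x).2 * (u.q y).2) := by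
  conv_lhs => rw [← u.emb_q x, ← u.emb_q y]
  rw [u.emb_mul, u.q_emb]

lemma q_one (u : IsUnitization A A') : u.q (1 : A') = (1, 0) := by
  have h : (1 : A') = u.emb (1, 0) := by rw [emb_apply]; simp
  rw [h, q_emb]

lemma q_iota (u : IsUnitization A A') (a : A) : u.q (u.ι a) = (0, a) := by
  have h : u.ι a = u.emb (0, a) := by rw [emb_apply]; simp
  rw [h, q_emb]

end IsUnitization

namespace ProjTensor

variable {A B C : Type*} [NonUnitalNormedRing A] [NormedSpace ℂ A]
    [NonUnitalNormedRing B] [NormedSpace ℂ B]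
    [NonUnitalNormedRing C] [NormedSpace ℂ C]

lemma dense_span_real (t : ProjTensor A B C) :
    Dense ((Submodule.span ℝ (Set.range fun p : A × B => t.tp p.1 p.2) :
      Submodule ℝ C) : Set C) := by
  set s : Set C := Set.range fun p : A × B => t.tp p.1 p.2 with hs
  have hsmul : ∀ (z : ℂ), ∀ x ∈ s, z • x ∈ s := by
    rintro z x ⟨⟨a, b⟩, rfl⟩
    exact ⟨(z • a, b), by simp⟩
  have hsub' : ∀ x, x ∈ Submodule.span ℂ s → x ∈ Submodule.span ℝ s := by
    intro x hx
    induction hx using Submodule.span_induction with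
    | mem y hy => exact Submodule.subset_span hy
    | zero => exact (Submodule.span ℝ s).zero_mem
    | add y z _ _ ihy ihz => exact (Submodule.span ℝ s).add_mem ihy ihz
    | smul z y _ ihy =>
      have : ∀ w ∈ Submodule.span ℝ s, z • w ∈ Submodule.span ℝ s := by
        intro w hw
        induction hw using Submodule.span_induction with
        | mem v hv => exact Submodule.subset_span (hsmul z v hv)
        | zero => simpa using (Submodule.span ℝ s).zero_mem
        | add v v' _ _ ih ih' => rw [smul_add]; exact (Submodule.span ℝ s).add_mem ih ih'
        | smul r v _ ih =>
          rw [smul_comm]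
          exact (Submodule.span ℝ s).smul_mem r ih
      exact this y ihy
  exact t.dense_span.mono fun x hx => hsub' x hx

lemma ext_elem (t : ProjTensor A B C) {W : Type*} [NormedAddCommGroup W]
    [NormedSpace ℂ W] {F G : C →L[ℂ] W}
    (h : ∀ a b, F (t.tp a b) = G (t.tp a b)) : F = G :=
  ContinuousLinearMap.ext_on t.dense_span (by rintro x ⟨⟨a, b⟩, rfl⟩; exact h a b)

lemma ext_elem_real (t : ProjTensor A B C) {W : Type*} [NormedAddCommGroup W]
    [NormedSpace ℝ W] {F G : C →L[ℝ] W}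
    (h : ∀ a b, F (t.tp a b) = G (t.tp a b)) : F = G :=
  ContinuousLinearMap.ext_on t.dense_span_real (by rintro x ⟨⟨a, b⟩, rfl⟩; exact h a b)

/-- Two separately-continuous-linear bilinear expressions agreeing on elementary tensors
agree everywhere. -/
lemma bilin_ext (t : ProjTensor A B C) {W : Type*} [NormedAddCommGroup W]
    [NormedSpace ℂ W] (T S : C → C → W)
    (hT1 : ∀ c', ∃ Φ : C →L[ℂ] W, ∀ c, Φ c = T c c')
    (hT2 : ∀ c, ∃ Φ : C →L[ℂ] W, ∀ c', Φ c' = T c c')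
    (hS1 : ∀ c', ∃ Φ : C →L[ℂ] W, ∀ c, Φ c = S c c')
    (hS2 : ∀ c, ∃ Φ : C →L[ℂ] W, ∀ c', Φ c' = S c c')
    (h : ∀ a b a' b', T (t.tp a b) (t.tp a' b') = S (t.tp a b) (t.tp a' b')) :
    ∀ c c', T c c' = S c c' := by
  have step1 : ∀ a b c', T (t.tp a b) c' = S (t.tp a b) c' := by
    intro a b c'
    obtain ⟨Φ, hΦ⟩ := hT2 (t.tp a b)
    obtain ⟨Ψ, hΨ⟩ := hS2 (t.tp a b)
    rw [← hΦ, ← hΨ]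
    have : Φ = Ψ := t.ext_elem fun a' b' => by rw [hΦ, hΨ]; exact h a b a' b'
    rw [this]
  intro c c'
  obtain ⟨Φ, hΦ⟩ := hT1 c'
  obtain ⟨Ψ, hΨ⟩ := hS1 c'
  rw [← hΦ, ← hΨ]
  have : Φ = Ψ := t.ext_elem fun a b => by rw [hΦ, hΨ]; exact step1 a b c'
  rw [this]

/-- A continuous linear map applied to products agrees with a bilinear expression provided
they agree on elementary tensors. -/
lemma mul_ext (t : ProjTensor A B C)
    (hsm : ∀ (r : ℝ) (c c' : C), (r • c) * c' = r • (c * c'))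
    (hms : ∀ (r : ℝ) (c c' : C), c * (r • c') = r • (c * c'))
    {W : Type*} [NormedAddCommGroup W] [NormedSpace ℂ W]
    (S : C →L[ℂ] W) (T : C → C → W)
    (hT1 : ∀ c', ∃ Φ : C →L[ℂ] W, ∀ c, Φ c = T c c')
    (hT2 : ∀ c, ∃ Φ : C →L[ℂ] W, ∀ c', Φ c' = T c c')
    (h : ∀ a b a' b', S (t.tp a b * t.tp a' b') = T (t.tp a b) (t.tp a' b')) :
    ∀ c c', S (c * c') = T c c' := by
  letI : IsScalarTower ℝ C C :=
    ⟨fun r c c' => by simp only [smul_eq_mul]; exact hsm r c c'⟩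
  letI : SMulCommClass ℝ C C :=
    ⟨fun r c c' => by simp only [smul_eq_mul]; rw [hms]⟩
  have step1 : ∀ (c : C) (a' : A) (b' : B), S (c * t.tp a' b') = T c (t.tp a' b') := by
    intro c a' b'
    obtain ⟨Φ, hΦ⟩ := hT1 (t.tp a' b')
    have key : (S.restrictScalars ℝ).comp ((ContinuousLinearMap.mul ℝ C).flip (t.tp a' b'))
        = Φ.restrictScalars ℝ := by
      apply t.ext_elem_real
      intro a b
      simp only [ContinuousLinearMap.coe_comp', Function.comp_apply,
        ContinuousLinearMap.flip_apply, ContinuousLinearMap.mul_apply',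
        ContinuousLinearMap.coe_restrictScalars']
      rw [hΦ]
      exact h a b a' b'
    have := DFunLike.congr_fun key c
    simpa only [ContinuousLinearMap.coe_comp', Function.comp_apply,
      ContinuousLinearMap.flip_apply, ContinuousLinearMap.mul_apply',
      ContinuousLinearMap.coe_restrictScalars', hΦ] using this
  intro c c'
  obtain ⟨Φ, hΦ⟩ := hT2 c
  have key : (S.restrictScalars ℝ).comp (ContinuousLinearMap.mul ℝ C c)
      = Φ.restrictScalars ℝ := by
    apply t.ext_elem_real
    intro a' b'
    simp only [ContinuousLinearMap.coe_comp', Function.comp_apply,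
      ContinuousLinearMap.mul_apply', ContinuousLinearMap.coe_restrictScalars']
    rw [hΦ]
    exact step1 c a' b'
  have := DFunLike.congr_fun key c'
  simpa only [ContinuousLinearMap.coe_comp', Function.comp_apply,
    ContinuousLinearMap.mul_apply', ContinuousLinearMap.coe_restrictScalars', hΦ] using this

end ProjTensor

end Aux

set_option maxHeartbeats 2000000 in
/-- if `A# ⊗̂ B#` is approximately amenable, then so is `B`. -/
theorem approxAmenable_right_of_unitization_tensor
    {A B A' B' C : Type*}
    [NonUnitalNormedRing A] [NormedSpace ℂ A] [CompleteSpace A]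
    [NonUnitalNormedRing B] [NormedSpace ℂ B] [CompleteSpace B]
    [NormedRing A'] [NormedAlgebra ℂ A'] [CompleteSpace A']
    [NormedRing B'] [NormedAlgebra ℂ B'] [CompleteSpace B']
    [NonUnitalNormedRing C] [NormedSpace ℂ C] [CompleteSpace C]
    (uA : IsUnitization A A') (uB : IsUnitization B B')
    (t : ProjTensor A' B' C)
    (h : ApproxAmenable C) : ApproxAmenable B := by
  intro X _inst1 _inst2 _inst3 M D hD
  classical
  -- real homogeneity of the multiplication of `C`
  have hsm : ∀ (r : ℝ) (c c' : C), (r • c) * c' = r • (c * c') := by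
    intro r c c'
    have hc : Continuous fun s : ℝ => (s • c) * c' :=
      (continuous_id.smul continuous_const).mul continuous_const
    let f : ℝ →+ C := AddMonoidHom.mk' (fun s => (s • c) * c')
      (fun s s' => by simp [add_smul, add_mul])
    have h1 : (f.toRealLinearMap hc) r = r • ((f.toRealLinearMap hc) 1) := by
      conv_lhs => rw [show r = r • (1 : ℝ) by simp]
      exact _root_.map_smul _ r 1
    have h2 : (r • c) * c' = r • (((1 : ℝ) • c) * c') := h1
    simpa using h2
  have hms : ∀ (r : ℝ) (c c' : C), c * (r • c') = r • (c * c') := by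
    intro r c c'
    have hc : Continuous fun s : ℝ => c * (s • c') :=
      continuous_const.mul (continuous_id.smul continuous_const)
    let f : ℝ →+ C := AddMonoidHom.mk' (fun s => c * (s • c'))
      (fun s s' => by simp [add_smul, mul_add])
    have h1 : (f.toRealLinearMap hc) r = r • ((f.toRealLinearMap hc) 1) := by
      conv_lhs => rw [show r = r • (1 : ℝ) by simp]
      exact _root_.map_smul _ r 1
    have h2 : c * (r • c') = r • (c * ((1 : ℝ) • c')) := h1
    simpa using h2
  -- the character on `A'`
  let φ : A' →L[ℂ] ℂ := (ContinuousLinearMap.fst ℂ ℂ A).comp uA.q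
  have hφ_apply : ∀ x : A', φ x = (uA.q x).1 := fun _ => rfl
  have hφ_mul : ∀ x y : A', φ (x * y) = φ x * φ y := by
    intro x y; simp [hφ_apply, uA.q_mul]
  have hφ_one : φ (1 : A') = 1 := by simp [hφ_apply, uA.q_one]
  -- the actions of `B'` on `X`
  let LB : B' →L[ℂ] X →L[ℂ] X :=
    (((ContinuousLinearMap.lsmul ℂ ℂ : ℂ →L[ℂ] (X →L[ℂ] X)).comp
        (ContinuousLinearMap.fst ℂ ℂ B))
      + M.l.comp (ContinuousLinearMap.snd ℂ ℂ B)).comp uB.q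
  have hLB_apply : ∀ (y : B') (x : X), LB y x = (uB.q y).1 • x + M.l (uB.q y).2 x :=
    fun _ _ => rfl
  let RB : B' →L[ℂ] X →L[ℂ] X :=
    (((ContinuousLinearMap.lsmul ℂ ℂ : ℂ →L[ℂ] (X →L[ℂ] X)).comp
        (ContinuousLinearMap.fst ℂ ℂ B))
      + M.r.comp (ContinuousLinearMap.snd ℂ ℂ B)).comp uB.q
  have hRB_apply : ∀ (y : B') (x : X), RB y x = (uB.q y).1 • x + M.r (uB.q y).2 x :=
    fun _ _ => rfl
  let DB : B' →L[ℂ] X →L[ℂ] ℂ := D.comp ((ContinuousLinearMap.snd ℂ ℂ B).comp uB.q)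
  have hDB_apply : ∀ (y : B'), DB y = D (uB.q y).2 := fun _ => rfl
  -- multiplicativity of the actions
  have hLBmul : ∀ (y z : B') (x : X), LB (y * z) x = LB y (LB z x) := by
    intro y z x
    simp only [hLB_apply, uB.q_mul, map_add, _root_.map_smul, ContinuousLinearMap.add_apply,
      ContinuousLinearMap.coe_smul', Pi.smul_apply, M.l_mul, smul_add]
    module
  have hRBmul : ∀ (y z : B') (x : X), RB (y * z) x = RB z (RB y x) := by
    intro y z x
    simp only [hRB_apply, uB.q_mul, map_add, _root_.map_smul, ContinuousLinearMap.add_apply,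
      ContinuousLinearMap.coe_smul', Pi.smul_apply, M.r_mul, smul_add]
    module
  have hlrB : ∀ (y z : B') (x : X), LB y (RB z x) = RB z (LB y x) := by
    intro y z x
    simp only [hLB_apply, hRB_apply, map_add, _root_.map_smul, smul_add, M.lr]
    module
  have hDBmul : ∀ (y z : B') (ξ : X), DB (y * z) ξ = DB z (RB y ξ) + DB y (LB z ξ) := by
    intro y z ξ
    have hd : D ((uB.q y).2 * (uB.q z).2) ξ
        = D (uB.q z).2 (M.r (uB.q y).2 ξ) + D (uB.q y).2 (M.l (uB.q z).2 ξ) := by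
      rw [hD]
      rw [ContinuousLinearMap.add_apply, M.dual_l_apply, M.dual_r_apply]
    simp only [hDB_apply, hLB_apply, hRB_apply, uB.q_mul, map_add, _root_.map_smul,
      ContinuousLinearMap.add_apply, ContinuousLinearMap.coe_smul', Pi.smul_apply]
    rw [hd]
    simp only [smul_eq_mul]
    ring
  -- lifts to `C`
  let ΨL : A' →L[ℂ] B' →L[ℂ] X →L[ℂ] X := φ.smulRight LB
  let ΨR : A' →L[ℂ] B' →L[ℂ] X →L[ℂ] X := φ.smulRight RB
  let ΨD : A' →L[ℂ] B' →L[ℂ] X →L[ℂ] ℂ := φ.smulRight DB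
  obtain ⟨Lc, -, hLc0⟩ := t.lift (X →L[ℂ] X) ΨL
  obtain ⟨Rc, -, hRc0⟩ := t.lift (X →L[ℂ] X) ΨR
  obtain ⟨Dc, -, hDc0⟩ := t.lift (X →L[ℂ] ℂ) ΨD
  have hLc : ∀ (a : A') (b : B'), Lc (t.tp a b) = φ a • LB b := fun a b => by
    rw [hLc0]; rfl
  have hRc : ∀ (a : A') (b : B'), Rc (t.tp a b) = φ a • RB b := fun a b => by
    rw [hRc0]; rfl
  have hDc : ∀ (a : A') (b : B'), Dc (t.tp a b) = φ a • DB b := fun a b => by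
    rw [hDc0]; rfl
  -- the bimodule axioms for the lifted actions
  have hlmul : ∀ (c c' : C), Lc (c * c') = (Lc c).comp (Lc c') := by
    refine t.mul_ext hsm hms Lc (fun c c' => (Lc c).comp (Lc c'))
      (fun c' => ⟨((ContinuousLinearMap.compL ℂ X X X).flip (Lc c')).comp Lc,
        fun c => rfl⟩)
      (fun c => ⟨(ContinuousLinearMap.compL ℂ X X X (Lc c)).comp Lc, fun c' => rfl⟩)
      ?_
    intro a b a' b'
    beta_reduce
    rw [← t.mk_mul, hLc (a*a') (b*b'), hLc a b, hLc a' b']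
    ext x
    simp only [hφ_mul, ContinuousLinearMap.coe_comp', Function.comp_apply,
      ContinuousLinearMap.coe_smul', Pi.smul_apply, _root_.map_smul, hLBmul, smul_smul]
  have hrmul : ∀ (c c' : C), Rc (c * c') = (Rc c').comp (Rc c) := by
    refine t.mul_ext hsm hms Rc (fun c c' => (Rc c').comp (Rc c))
      (fun c' => ⟨(ContinuousLinearMap.compL ℂ X X X (Rc c')).comp Rc, fun c => rfl⟩)
      (fun c => ⟨((ContinuousLinearMap.compL ℂ X X X).flip (Rc c)).comp Rc,
        fun c' => rfl⟩)
      ?_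
    intro a b a' b'
    beta_reduce
    rw [← t.mk_mul, hRc (a*a') (b*b'), hRc a b, hRc a' b']
    ext x
    simp only [hφ_mul, ContinuousLinearMap.coe_comp', Function.comp_apply,
      ContinuousLinearMap.coe_smul', Pi.smul_apply, _root_.map_smul, hRBmul, smul_smul]
    ring_nf
  have hlr : ∀ (c c' : C), (Lc c).comp (Rc c') = (Rc c').comp (Lc c) := by
    refine t.bilin_ext (fun c c' => (Lc c).comp (Rc c'))
      (fun c c' => (Rc c').comp (Lc c))
      (fun c' => ⟨((ContinuousLinearMap.compL ℂ X X X).flip (Rc c')).comp Lc,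
        fun c => rfl⟩)
      (fun c => ⟨(ContinuousLinearMap.compL ℂ X X X (Lc c)).comp Rc, fun c' => rfl⟩)
      (fun c' => ⟨(ContinuousLinearMap.compL ℂ X X X (Rc c')).comp Lc, fun c => rfl⟩)
      (fun c => ⟨((ContinuousLinearMap.compL ℂ X X X).flip (Lc c)).comp Rc,
        fun c' => rfl⟩)
      ?_
    intro a b a' b'
    beta_reduce
    rw [hLc a b, hRc a' b']
    ext x
    simp only [ContinuousLinearMap.coe_comp', Function.comp_apply,
      ContinuousLinearMap.coe_smul', Pi.smul_apply, _root_.map_smul, hlrB, smul_smul]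
    ring_nf
  have hderiv : ∀ (c c' : C), Dc (c * c') = (Dc c').comp (Rc c) + (Dc c).comp (Lc c') := by
    refine t.mul_ext hsm hms Dc
      (fun c c' => (Dc c').comp (Rc c) + (Dc c).comp (Lc c'))
      (fun c' => ⟨(ContinuousLinearMap.compL ℂ X X ℂ (Dc c')).comp Rc
          + ((ContinuousLinearMap.compL ℂ X X ℂ).flip (Lc c')).comp Dc,
        fun c => rfl⟩)
      (fun c => ⟨((ContinuousLinearMap.compL ℂ X X ℂ).flip (Rc c)).comp Dc
          + (ContinuousLinearMap.compL ℂ X X ℂ (Dc c)).comp Lc,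
        fun c' => rfl⟩)
      ?_
    intro a b a' b'
    beta_reduce
    rw [← t.mk_mul, hDc (a*a') (b*b'), hDc a b, hDc a' b', hLc a' b', hRc a b]
    ext ξ
    simp only [hφ_mul, ContinuousLinearMap.add_apply, ContinuousLinearMap.coe_comp',
      Function.comp_apply, ContinuousLinearMap.coe_smul', Pi.smul_apply, _root_.map_smul,
      hDBmul, smul_eq_mul]
    ring
  -- the `C`-bimodule and derivation
  let MC : BBimod C X :=
    ⟨Lc, Rc,
      fun c c' x => by rw [hlmul]; rfl,
      fun c c' x => by rw [hrmul]; rfl,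
      fun c c' x => by
        have := DFunLike.congr_fun (hlr c c') x
        simpa using this⟩
  have hMCl : ∀ (c : C) (g : X →L[ℂ] ℂ) (ξ : X), MC.dual.l c g ξ = g (Rc c ξ) :=
    fun _ _ _ => rfl
  have hMCr : ∀ (c : C) (g : X →L[ℂ] ℂ) (ξ : X), MC.dual.r c g ξ = g (Lc c ξ) :=
    fun _ _ _ => rfl
  have hDcDeriv : MC.dual.IsDeriv Dc := by
    intro c c'
    rw [hderiv c c']
    ext ξ
    simp only [ContinuousLinearMap.add_apply, ContinuousLinearMap.coe_comp',
      Function.comp_apply, hMCl, hMCr]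
  obtain ⟨κ, lf, f, hne, htend⟩ := h X MC Dc hDcDeriv
  refine ⟨κ, lf, f, hne, ?_⟩
  intro b
  have key := htend (t.tp 1 (uB.ι b))
  have e1 : Dc (t.tp 1 (uB.ι b)) = D b := by
    rw [hDc, hφ_one, one_smul, hDB_apply, uB.q_iota]
  have e2 : ∀ g : X →L[ℂ] ℂ, MC.dual.l (t.tp 1 (uB.ι b)) g = M.dual.l b g := by
    intro g
    ext ξ
    rw [hMCl, M.dual_l_apply]
    congr 1
    rw [hRc, hφ_one, one_smul, hRB_apply, uB.q_iota]
    simp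
  have e3 : ∀ g : X →L[ℂ] ℂ, MC.dual.r (t.tp 1 (uB.ι b)) g = M.dual.r b g := by
    intro g
    ext ξ
    rw [hMCr, M.dual_r_apply]
    congr 1
    rw [hLc, hφ_one, one_smul, hLB_apply, uB.q_iota]
    simp
  have efun : (fun i => MC.dual.l (t.tp 1 (uB.ι b)) (f i)
      - MC.dual.r (t.tp 1 (uB.ι b)) (f i))
      = fun i => M.dual.l b (f i) - M.dual.r b (f i) :=
    funext fun i => by rw [e2, e3]
  rw [efun, e1] at key
  exact key
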